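/- The minimum distance of the Reed-Muller code RM(r,m) is 2^{m−r}, for 0 ≤ r ≤ m. -/
import Mathlib

open Finset


lemma zmod2_cases : ∀ a : ZMod 2, a = 0 ∨ a = 1 := by decide

lemma zmod2_pow (a : ZMod 2) {k : ℕ} (hk : k ≠ 0) : a ^ k = a := by
  rcases zmod2_cases a with h | h <;> subst h
  · exact zero_pow hk
  · exact one_pow _

lemma zmod2_ne_zero {a : ZMod 2} (h : a ≠ 0) : a = 1 := by
  revert h; revert a; decide

lemma prod_eq_one_iff {α : Type*} (S : Finset α) (x : α → ZMod 2) :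
    ∏ i ∈ S, x i = 1 ↔ ∀ i ∈ S, x i = 1 := by
  constructor
  · intro hp
    by_contra hc
    push_neg at hc
    obtain ⟨i, hi, hne⟩ := hc
    have : x i = 0 := (zmod2_cases (x i)).resolve_right hne
    rw [Finset.prod_eq_zero hi this] at hp
    exact absurd hp (by decide)
  · exact Finset.prod_eq_one

lemma chi_indicator {m : ℕ} (S T : Finset (Fin m)) :
    (∏ i ∈ T, (if i ∈ S then (1 : ZMod 2) else 0)) = if T ⊆ S then 1 else 0 := by
  by_cases h : T ⊆ S
  · rw [if_pos h]
    exact Finset.prod_eq_one fun i hi => if_pos (h hi)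
  · rw [if_neg h]
    obtain ⟨i, hi, hiS⟩ := not_subset.mp h
    exact Finset.prod_eq_zero hi (if_neg hiS)

lemma lemA {m : ℕ} (c : Finset (Fin m) → ZMod 2)
    (h : ∀ x : Fin m → ZMod 2, ∑ T : Finset (Fin m), c T * ∏ i ∈ T, x i = 0) :
    ∀ S, c S = 0 := by
  intro S
  induction S using Finset.strongInduction with
  | _ S ih =>
    have h1 := h (fun i => if i ∈ S then 1 else 0)
    simp only [chi_indicator, mul_ite, mul_one, mul_zero] at h1
    rw [Finset.sum_ite, Finset.sum_const_zero, add_zero] at h1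
    have hfil : (Finset.univ.filter (fun T : Finset (Fin m) => T ⊆ S)) = S.powerset := by
      ext T; simp [Finset.mem_powerset]
    rw [hfil, ← Finset.sum_erase_add _ _ (Finset.mem_powerset_self S)] at h1
    have : ∑ T ∈ S.powerset.erase S, c T = 0 := by
      apply Finset.sum_eq_zero
      intro T hT
      rw [Finset.mem_erase, Finset.mem_powerset] at hT
      exact ih T (lt_of_le_of_ne hT.2 hT.1)
    rw [this, zero_add] at h1
    exact h1

lemma restrict_nonzero {m : ℕ} (c : Finset (Fin m) → ZMod 2) (S : Finset (Fin m))
    (hS : c S ≠ 0) (hmax : ∀ T, c T ≠ 0 → T.card ≤ S.card) (z : Fin m → ZMod 2) :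
    ∃ x : Fin m → ZMod 2, (∑ T : Finset (Fin m), c T * ∏ i ∈ T, x i) ≠ 0 ∧
      ∀ i, i ∉ S → x i = z i := by
  set c'' : Finset (Fin m) → ZMod 2 :=
    fun U => ∑ T ∈ Finset.univ.filter (fun T : Finset (Fin m) => T ∩ S = U),
      c T * ∏ i ∈ T \ S, z i with hc''
  have hc''S : c'' S = c S := by
    rw [hc'']
    simp only []
    rw [Finset.sum_eq_single S]
    · simp
    · intro T hT hTS
      rw [Finset.mem_filter] at hT
      have hsub : S ⊆ T := by
        exact hT.2 ▸ Finset.inter_subset_left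
      have : c T = 0 := by
        by_contra hcT
        have h1 := hmax T hcT
        have h2 : S.card < T.card := Finset.card_lt_card (lt_of_le_of_ne hsub (Ne.symm hTS))
        omega
      rw [this, zero_mul]
    · intro hSnot
      exact absurd (by simp : S ∈ Finset.univ.filter (fun T : Finset (Fin m) => T ∩ S = S))
        hSnot
  -- c'' is not identically giving zero sums
  have hne : ∃ x0 : Fin m → ZMod 2, (∑ U : Finset (Fin m), c'' U * ∏ i ∈ U, x0 i) ≠ 0 := by
    by_contra hc0
    push_neg at hc0
    exact hS (hc''S ▸ lemA c'' hc0 S)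
  obtain ⟨x0, hx0⟩ := hne
  refine ⟨fun i => if i ∈ S then x0 i else z i, ?_, fun i hi => if_neg hi⟩
  -- show the sums are equal
  have key : (∑ T : Finset (Fin m), c T * ∏ i ∈ T, (if i ∈ S then x0 i else z i))
      = ∑ U : Finset (Fin m), c'' U * ∏ i ∈ U, x0 i := by
    simp only [hc'', Finset.sum_mul]
    rw [← Finset.sum_fiberwise Finset.univ (fun T : Finset (Fin m) => T ∩ S)
      (fun T => c T * ∏ i ∈ T, (if i ∈ S then x0 i else z i))]
    apply Finset.sum_congr rfl
    intro U _
    apply Finset.sum_congr rfl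
    intro T hT
    rw [Finset.mem_filter] at hT
    rw [← hT.2]
    rw [← Finset.prod_inter_mul_prod_diff T S (fun i => if i ∈ S then x0 i else z i)]
    have e1 : ∏ i ∈ T ∩ S, (if i ∈ S then x0 i else z i) = ∏ i ∈ T ∩ S, x0 i :=
      Finset.prod_congr rfl fun i hi => if_pos (Finset.mem_inter.mp hi).2
    have e2 : ∏ i ∈ T \ S, (if i ∈ S then x0 i else z i) = ∏ i ∈ T \ S, z i :=
      Finset.prod_congr rfl fun i hi => if_neg (Finset.mem_sdiff.mp hi).2
    rw [e1, e2]; ring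
  rw [key]; exact hx0


lemma card_compl_fun {m : ℕ} (S : Finset (Fin m)) :
    Fintype.card ({i : Fin m // i ∉ S} → ZMod 2) = 2 ^ (m - S.card) := by
  rw [Fintype.card_fun, ZMod.card]
  congr 1
  rw [Fintype.card_subtype_compl]
  simp [Fintype.card_coe]

lemma card_pow_ge {m : ℕ} (S : Finset (Fin m)) (P : (Fin m → ZMod 2) → Prop)
    [DecidablePred P]
    (hv : ∀ z : Fin m → ZMod 2, ∃ x, P x ∧ ∀ i, i ∉ S → x i = z i) :
    2 ^ (m - S.card) ≤ (Finset.univ.filter P).card := by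
  classical
  have key : ∀ z' : {i : Fin m // i ∉ S} → ZMod 2,
      ∃ x, x ∈ Finset.univ.filter P ∧ ∀ i : {i : Fin m // i ∉ S}, x i.1 = z' i := by
    intro z'
    obtain ⟨x, hx, hag⟩ := hv (fun i => if h : i ∈ S then 0 else z' ⟨i, h⟩)
    refine ⟨x, by simp [hx], fun i => ?_⟩
    rw [hag i.1 i.2]
    exact dif_neg i.2
  choose F hF1 hF2 using key
  have hinj : Function.Injective F := by
    intro z1 z2 he
    funext i
    rw [← hF2 z1 i, ← hF2 z2 i, he]
  have := Fintype.card_le_of_injective (fun z' => (⟨F z', hF1 z'⟩ :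
    {x // x ∈ Finset.univ.filter P})) (fun a b hab => hinj (Subtype.mk_eq_mk.mp hab))
  rwa [card_compl_fun, Fintype.card_coe] at this

lemma card_eq_weight {m : ℕ} (S : Finset (Fin m)) :
    (Finset.univ.filter (fun x : Fin m → ZMod 2 => ∀ i ∈ S, x i = 1)).card
      = 2 ^ (m - S.card) := by
  classical
  apply le_antisymm
  · -- injection into functions on complement
    have hinj : Function.Injective
        (fun x : {x // x ∈ Finset.univ.filter (fun x : Fin m → ZMod 2 => ∀ i ∈ S, x i = 1)} =>
          (fun i : {i : Fin m // i ∉ S} => x.1 i.1)) := by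
      intro x1 x2 he
      have hx1 := (Finset.mem_filter.mp x1.2).2
      have hx2 := (Finset.mem_filter.mp x2.2).2
      apply Subtype.ext
      funext i
      by_cases hi : i ∈ S
      · rw [hx1 i hi, hx2 i hi]
      · exact congrFun he ⟨i, hi⟩
    have := Fintype.card_le_of_injective _ hinj
    rwa [card_compl_fun, Fintype.card_coe] at this
  · apply card_pow_ge
    intro z
    exact ⟨fun i => if i ∈ S then 1 else z i, fun i hi => if_pos hi, fun i hi => if_neg hi⟩

/-- The Reed-Muller code `RM(r,m)`. -/
def RM (r m : ℕ) : Submodule (ZMod 2) ((Fin m → ZMod 2) → ZMod 2) :=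
  Submodule.span (ZMod 2)
    {v | ∃ f : MvPolynomial (Fin m) (ZMod 2),
      f.totalDegree ≤ r ∧ v = fun x => MvPolynomial.eval x f}

lemma mem_RM_rep {r m : ℕ} (v : (Fin m → ZMod 2) → ZMod 2) (hv : v ∈ RM r m) :
    ∃ c : Finset (Fin m) → ZMod 2, (∀ S, c S ≠ 0 → S.card ≤ r) ∧
      v = fun x => ∑ S : Finset (Fin m), c S * ∏ i ∈ S, x i := by
  classical
  refine Submodule.span_induction ?_ ?_ ?_ ?_ hv
  · rintro w ⟨f, hf, rfl⟩
    refine ⟨fun S => ∑ d ∈ f.support.filter (fun d => d.support = S), f.coeff d, ?_, ?_⟩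
    · intro S hS
      have hne : (f.support.filter (fun d => d.support = S)).Nonempty := by
        by_contra hc
        rw [Finset.not_nonempty_iff_eq_empty] at hc
        exact hS (by simp only [hc, Finset.sum_empty])
      obtain ⟨d, hd⟩ := hne
      rw [Finset.mem_filter] at hd
      have h1 : S.card ≤ d.sum fun _ e => e := by
        rw [← hd.2]
        calc d.support.card = ∑ i ∈ d.support, 1 := by rw [Finset.card_eq_sum_ones]
        _ ≤ ∑ i ∈ d.support, d i := Finset.sum_le_sum fun i hi =>
            Nat.one_le_iff_ne_zero.mpr (Finsupp.mem_support_iff.mp hi)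
        _ = d.sum fun _ e => e := rfl
      exact h1.trans ((MvPolynomial.le_totalDegree hd.1).trans hf)
    · funext x
      rw [MvPolynomial.eval_eq]
      rw [← Finset.sum_fiberwise f.support (fun d => d.support)
        (fun d => f.coeff d * ∏ i ∈ d.support, x i ^ d i)]
      apply Finset.sum_congr rfl
      intro S _
      rw [Finset.sum_mul]
      apply Finset.sum_congr rfl
      intro d hd
      rw [Finset.mem_filter] at hd
      congr 1
      rw [← hd.2]
      exact Finset.prod_congr rfl fun i hi =>
        zmod2_pow (x i) (Finsupp.mem_support_iff.mp hi)
  · exact ⟨0, fun S hS => absurd rfl hS, by funext x; simp⟩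
  · rintro w1 w2 - - ⟨c1, hc1, rfl⟩ ⟨c2, hc2, rfl⟩
    refine ⟨c1 + c2, fun S hS => ?_, ?_⟩
    · by_cases h1 : c1 S = 0
      · exact hc2 S (by simpa [h1] using hS)
      · exact hc1 S h1
    · funext x
      simp [add_mul, Finset.sum_add_distrib]
  · rintro a w - ⟨c, hc, rfl⟩
    refine ⟨a • c, fun S hS => hc S (by intro h0; apply hS; simp [h0]), ?_⟩
    funext x
    simp [Finset.mul_sum, mul_assoc]

/-- The minimum distance of `RM(r,m)` is `2^(m-r)` for `0 ≤ r ≤ m`: there is a nonzero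
codeword of weight `2^(m-r)`, and every nonzero codeword has weight at least `2^(m-r)`. -/
theorem RM_min_distance (r m : ℕ) (h : r ≤ m) :
    (∃ v ∈ RM r m, v ≠ 0 ∧
        (Finset.univ.filter (fun x : Fin m → ZMod 2 => v x = 1)).card = 2 ^ (m - r)) ∧
    (∀ v ∈ RM r m, v ≠ 0 →
        2 ^ (m - r) ≤ (Finset.univ.filter (fun x : Fin m → ZMod 2 => v x = 1)).card) := by
  classical
  constructor
  · -- existence
    set S₀ : Finset (Fin m) := Finset.univ.image (Fin.castLE h) with hS₀
    have hcard : S₀.card = r := by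
      rw [hS₀, Finset.card_image_of_injective _ (Fin.castLE_injective h), Finset.card_univ,
        Fintype.card_fin]
    refine ⟨fun x => ∏ i ∈ S₀, x i, ?_, ?_, ?_⟩
    · apply Submodule.subset_span
      refine ⟨∏ i ∈ S₀, MvPolynomial.X i, ?_, ?_⟩
      · calc (∏ i ∈ S₀, MvPolynomial.X i : MvPolynomial (Fin m) (ZMod 2)).totalDegree
            ≤ ∑ i ∈ S₀, (MvPolynomial.X i : MvPolynomial (Fin m) (ZMod 2)).totalDegree :=
              MvPolynomial.totalDegree_finset_prod _ _
        _ = S₀.card := by simp [MvPolynomial.totalDegree_X]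
        _ = r := hcard
      · funext x; simp
    · intro h0
      have := congrFun h0 (fun _ => 1)
      simp at this
    · have : (Finset.univ.filter (fun x : Fin m → ZMod 2 => ∏ i ∈ S₀, x i = 1))
          = Finset.univ.filter (fun x : Fin m → ZMod 2 => ∀ i ∈ S₀, x i = 1) := by
        apply Finset.filter_congr
        intro x _
        exact prod_eq_one_iff S₀ x
      rw [this, card_eq_weight, hcard]
  · -- lower bound
    intro v hv hv0
    obtain ⟨c, hcr, rfl⟩ := mem_RM_rep v hv
    have hA : (Finset.univ.filter (fun S : Finset (Fin m) => c S ≠ 0)).Nonempty := by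
      by_contra hc
      rw [Finset.not_nonempty_iff_eq_empty, Finset.filter_eq_empty_iff] at hc
      apply hv0
      funext x
      simp only [Pi.zero_apply]
      apply Finset.sum_eq_zero
      intro S _
      rw [not_not.mp (hc (Finset.mem_univ S)), zero_mul]
    obtain ⟨S, hSA, hSmax⟩ := Finset.exists_max_image _ Finset.card hA
    rw [Finset.mem_filter] at hSA
    have hmax : ∀ T, c T ≠ 0 → T.card ≤ S.card := fun T hT =>
      hSmax T (Finset.mem_filter.mpr ⟨Finset.mem_univ T, hT⟩)
    have hbound := card_pow_ge S
      (fun x : Fin m → ZMod 2 => (∑ T : Finset (Fin m), c T * ∏ i ∈ T, x i) = 1)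
      (fun z => by
        obtain ⟨x, hx, hag⟩ := restrict_nonzero c S hSA.2 hmax z
        exact ⟨x, zmod2_ne_zero hx, hag⟩)
    calc 2 ^ (m - r) ≤ 2 ^ (m - S.card) :=
          Nat.pow_le_pow_right (by norm_num) (Nat.sub_le_sub_left (hcr S hSA.2) m)
    _ ≤ _ := hbound
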